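/- For arbitrary scalars p and q, the skew-symmetric bilinear map φ_5(p,q) on h_2 defined by φ_5(e_1,e_3) = p e_1, φ_5(e_2,e_3) = e_1 + q e_2 + e_4, φ_5(e_3,e_4) = −p e_4, φ_5(e_3,e_5) = −(p+q)e_5, and zero otherwise, is a 2-cocycle of h_2 with adjoint coefficients, and the deformed bracket [x,y]_t = [x,y] + t φ_5(p,q)(x,y) satisfies the Jacobi identity for every t. -/
import Mathlib


set_option maxHeartbeats 4000000
noncomputable section

/-- The underlying space of the 5-dimensional Heisenberg Lie algebra `h₂`. -/
abbrev V : Type := Fin 5 → ℝ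

/-- Basis vectors: `e 0, …, e 4` are `e₁, …, e₅`. -/
def e (i : Fin 5) : V := Pi.single i 1

/-- The Heisenberg bracket on `h₂`: `[e₁,e₃] = e₅`, `[e₂,e₄] = e₅`. -/
def br (x y : V) : V :=
  (x 0 * y 2 - x 2 * y 0 + x 1 * y 3 - x 3 * y 1) • e 4

/-- The deformed bracket `[x,y]_t = [x,y] + t • φ x y`. -/
def brt (t : ℝ) (φ : V → V → V) (x y : V) : V := br x y + t • φ x y

/-- The Chevalley–Eilenberg 2-cocycle condition (adjoint coefficients) for a
skew-symmetric 2-cochain `φ` on `h₂`. -/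
def IsCocycle (φ : V → V → V) : Prop :=
  ∀ x y z : V,
    φ (br x y) z - φ (br x z) y + φ (br y z) x
      - br x (φ y z) + br y (φ x z) - br z (φ x y) = 0

/-- `φ₅(p,q)`: `(e₁,e₃) ↦ p e₁`, `(e₂,e₃) ↦ e₁ + q e₂ + e₄`, `(e₃,e₄) ↦ −p e₄`, `(e₃,e₅) ↦ −(p+q)e₅`, zero otherwise. -/
def phi5 (p q : ℝ) (x y : V) : V :=
  (x 0 * y 2 - x 2 * y 0) • (p • e 0)
  + (x 1 * y 2 - x 2 * y 1) • (e 0 + q • e 1 + e 3)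
  + (x 2 * y 3 - x 3 * y 2) • ((-p) • e 3)
  + (x 2 * y 4 - x 4 * y 2) • ((-(p + q)) • e 4)


lemma br_apply (x y : V) (j : Fin 5) :
    br x y j = (x 0 * y 2 - x 2 * y 0 + x 1 * y 3 - x 3 * y 1) * (if (j : ℕ) = 4 then 1 else 0) := by
  fin_cases j <;> simp [br, e, Pi.single_apply]

lemma phi5_apply (p q : ℝ) (x y : V) (j : Fin 5) :
    phi5 p q x y j =
      (x 0 * y 2 - x 2 * y 0) * p * (if (j : ℕ) = 0 then 1 else 0)
      + (x 1 * y 2 - x 2 * y 1) * ((if (j : ℕ) = 0 then 1 else 0) + q * (if (j : ℕ) = 1 then 1 else 0) + (if (j : ℕ) = 3 then 1 else 0))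
      + (x 2 * y 3 - x 3 * y 2) * (-p) * (if (j : ℕ) = 3 then 1 else 0)
      + (x 2 * y 4 - x 4 * y 2) * (-(p + q)) * (if (j : ℕ) = 4 then 1 else 0) := by
  fin_cases j <;> simp [phi5, e, Pi.single_apply] <;> ring

/-- For arbitrary scalars `p, q`, `φ₅(p,q)` is a 2-cocycle of `h₂`, and the
deformed bracket `[x,y]_t = [x,y] + t φ₅(p,q)(x,y)` satisfies the Jacobi
identity for every `t`. -/
theorem phi5_cocycle_and_jacobi (p q : ℝ) :
    IsCocycle (phi5 p q) ∧
      ∀ (t : ℝ) (x y z : V),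
        brt t (phi5 p q) x (brt t (phi5 p q) y z)
          + brt t (phi5 p q) y (brt t (phi5 p q) z x)
          + brt t (phi5 p q) z (brt t (phi5 p q) x y) = 0 := by
  constructor
  · intro x y z
    funext j
    simp only [Pi.sub_apply, Pi.add_apply, Pi.zero_apply, br_apply, phi5_apply, show ((0:Fin 5):ℕ)=0 from rfl, show ((1:Fin 5):ℕ)=1 from rfl, show ((2:Fin 5):ℕ)=2 from rfl, show ((3:Fin 5):ℕ)=3 from rfl, show ((4:Fin 5):ℕ)=4 from rfl]
    fin_cases j <;> norm_num <;> ring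
  · intro t x y z
    funext j
    simp only [brt, Pi.add_apply, Pi.smul_apply, Pi.zero_apply, br_apply, phi5_apply, smul_eq_mul, show ((0:Fin 5):ℕ)=0 from rfl, show ((1:Fin 5):ℕ)=1 from rfl, show ((2:Fin 5):ℕ)=2 from rfl, show ((3:Fin 5):ℕ)=3 from rfl, show ((4:Fin 5):ℕ)=4 from rfl]
    fin_cases j <;> norm_num <;> ring

end
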